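/- Suppose S=(s_i) is an ideal aperiodic orientable sequence of order n > 1. Then D^{-1}(S) = {T, T̄} where T and T̄ are complementary, T begins with the n-tuple 0^n and ends with the n-tuple of alternating bits ending in T's last bit, and T̄ begins with 1^n and ends with the complementary alternating n-tuple. -/

import Mathlib

/-- The `n`-tuple of the finite sequence `L` at position `i` (as a list). -/
def ltup (L : List Bool) (n i : ℕ) : List Bool := (L.drop i).take n

/-- An aperiodic orientable sequence of order `n`: the `n`-tuples at positions
`0 ≤ i ≤ length - n`, together with their reverses, are pairwise distinct. -/
def isAOS (L : List Bool) (n : ℕ) : Prop :=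
  n ≤ L.length ∧ ∀ i j, i ≤ L.length - n → j ≤ L.length - n →
    (ltup L n i = ltup L n j → i = j) ∧ ltup L n i ≠ (ltup L n j).reverse

/-- The complement of a finite sequence. -/
def complL (L : List Bool) : List Bool := L.map (fun b => !b)

/-- The Lempel homomorphism `D` on finite sequences. -/
def DmapL (L : List Bool) : List Bool := L.zipWith xor L.tail

/-- The set `D⁻¹(S)` of finite sequences of length `|S| + 1` mapping to `S`. -/
def DinvL (S : List Bool) : Set (List Bool) :=
  { T | T.length = S.length + 1 ∧ DmapL T = S }

/-- Two finite sequences are disjoint if they share no `n`-tuple. -/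
def disjL (A B : List Bool) (n : ℕ) : Prop :=
  ∀ i j, i ≤ A.length - n → j ≤ B.length - n → ltup A n i ≠ ltup B n j

/-- Two finite sequences are o-disjoint: disjoint, and neither contains the
reverse of an `n`-tuple of the other. -/
def oDisjL (A B : List Bool) (n : ℕ) : Prop :=
  disjL A B n ∧ ∀ i j, i ≤ A.length - n → j ≤ B.length - n →
    ltup A n i ≠ (ltup B n j).reverse

/-- A finite sequence is primitive if it is disjoint from its complement. -/
def primitiveL (A : List Bool) (n : ℕ) : Prop := disjL A (complL A) n

/-- An ideal `AOS(n)`: its first `n-1` bits are `0` and its last `n-1` bits are `1`. -/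
def idealA (L : List Bool) (n : ℕ) : Prop :=
  isAOS L n ∧ (∀ i, i < n - 1 → L.getD i false = false) ∧
    (∀ i, i < n - 1 → L.getD (L.length - 1 - i) false = true)

/-- A finite sequence is alternating if its consecutive bits all differ. -/
def altL (L : List Bool) : Prop :=
  ∀ i, i + 1 < L.length → L.getD (i + 1) false = !(L.getD i false)


private lemma xor_cancel_left' (b s : Bool) : xor b (xor b s) = s := by
  cases b <;> cases s <;> rfl

private lemma dmap_cons_cons (b c : Bool) (L : List Bool) :
    DmapL (b :: c :: L) = xor b c :: DmapL (c :: L) := rfl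

private lemma scanl_cons' (b s : Bool) (l : List Bool) :
    List.scanl xor b (s :: l) = b :: List.scanl xor (xor b s) l := List.scanl_cons

private lemma dmap_scanl : ∀ (S : List Bool) (b : Bool), DmapL (List.scanl xor b S) = S := by
  intro S
  induction S with
  | nil => intro b; rfl
  | cons s rest ih =>
    intro b
    cases rest with
    | nil =>
      show DmapL [b, xor b s] = [s]
      simp [DmapL, xor_cancel_left']
    | cons r rs =>
      have h := ih (xor b s)
      rw [scanl_cons', scanl_cons'] at *
      rw [dmap_cons_cons, h, xor_cancel_left']

private lemma eq_scanl : ∀ (S U : List Bool), U.length = S.length + 1 → DmapL U = S →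
    U = List.scanl xor (U.headI) S := by
  intro S
  induction S with
  | nil =>
    intro U h1 _
    match U, h1 with
    | [u], _ => rfl
  | cons s rest ih =>
    intro U h1 h2
    match U with
    | [] => simp at h1
    | [u] => simp at h1
    | u :: u' :: U'' =>
      rw [dmap_cons_cons] at h2
      injection h2 with ha hb
      have h3 := ih (u' :: U'') (by simpa using h1) hb
      simp only [List.headI] at h3 ⊢
      rw [scanl_cons', ← ha, xor_cancel_left', ← h3]

private lemma compl_scanl : ∀ (S : List Bool) (b : Bool),
    complL (List.scanl xor b S) = List.scanl xor (!b) S := by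
  intro S
  induction S with
  | nil => intro b; rfl
  | cons s rest ih =>
    intro b
    rw [scanl_cons', scanl_cons']
    show (!b) :: complL (List.scanl xor (xor b s) rest) = (!b) :: List.scanl xor (xor (!b) s) rest
    rw [ih (xor b s)]
    congr 1
    cases b <;> cases s <;> rfl

private lemma getD_scanl_zero (b : Bool) (S : List Bool) :
    (List.scanl xor b S).getD 0 false = b := by cases S <;> simp [List.scanl_nil, List.scanl_cons]

private lemma getD_scanl_succ : ∀ (S : List Bool) (b : Bool) (i : ℕ), i < S.length →
    (List.scanl xor b S).getD (i + 1) false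
      = xor ((List.scanl xor b S).getD i false) (S.getD i false) := by
  intro S
  induction S with
  | nil => intro b i h; simp at h
  | cons s rest ih =>
    intro b i h
    rw [scanl_cons']
    cases i with
    | zero => simp [getD_scanl_zero]
    | succ k =>
      have h2 := ih (xor b s) k (by simpa using Nat.lt_of_succ_lt_succ h)
      simp only [List.getD_cons_succ]
      exact h2

private lemma getD_drop' : ∀ (L : List Bool) (k i : ℕ),
    (L.drop k).getD i false = L.getD (k + i) false := by
  intro L
  induction L with
  | nil => intro k i; simp
  | cons a l ih =>
    intro k i
    cases k with
    | zero => simp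
    | succ m =>
      have : m + 1 + i = (m + i) + 1 := by omega
      rw [this]
      simp only [List.drop_succ_cons, List.getD_cons_succ]
      exact ih m i


/-- Lemma 9: if `S` is an ideal `AOS(n)` with `n > 1`, then `D⁻¹(S) = {T, T̄}`
where `T` and `T̄` are complementary, `T` begins with `0^n` and ends with an
alternating `n`-tuple (ending in `T`'s last bit), and `T̄` begins with `1^n`
and ends with the complementary alternating `n`-tuple. -/
theorem dinv_of_ideal (n : ℕ) (S : List Bool) (hn : 1 < n)
    (hS : idealA S n) :
    ∃ T : List Bool, DinvL S = {T, complL T} ∧ T ≠ complL T ∧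
      (∀ i, i < n → T.getD i false = false) ∧
      altL (T.drop (T.length - n)) ∧
      (∀ i, i < n → (complL T).getD i false = true) ∧
      altL ((complL T).drop ((complL T).length - n)) := by

  obtain ⟨⟨hnlen, -⟩, hzero, hone⟩ := hS
  have len_scanl : ∀ b : Bool, (List.scanl xor b S).length = S.length + 1 := by
    intro b; simp [List.length_scanl]
  have hcompl : complL (List.scanl xor false S) = List.scanl xor true S := by
    simpa using compl_scanl S false
  have key : ∀ (b : Bool) (i : ℕ), i < n → (List.scanl xor b S).getD i false = b := by
    intro b i
    induction i with
    | zero => intro _; exact getD_scanl_zero b S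
    | succ k ih =>
      intro hk
      rw [getD_scanl_succ S b k (by omega), ih (by omega), hzero k (by omega)]
      simp
  have altkey : ∀ b : Bool,
      altL ((List.scanl xor b S).drop ((List.scanl xor b S).length - n)) := by
    intro b i hi
    rw [List.length_drop, len_scanl] at hi
    have hi' : i + 1 < n := by omega
    rw [getD_drop', getD_drop', len_scanl]
    have harith : S.length + 1 - n + (i + 1) = (S.length + 1 - n + i) + 1 := by omega
    rw [harith, getD_scanl_succ S b _ (by omega)]
    have hone' : S.getD (S.length + 1 - n + i) false = true := by
      have h := hone (n - 2 - i) (by omega)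
      have e : S.length - 1 - (n - 2 - i) = S.length + 1 - n + i := by omega
      rwa [e] at h
    rw [hone']
    simp
  refine ⟨List.scanl xor false S, ?_, ?_, key false, altkey false, ?_, ?_⟩
  · ext U
    simp only [DinvL, Set.mem_setOf_eq, Set.mem_insert_iff, Set.mem_singleton_iff]
    constructor
    · rintro ⟨h1, h2⟩
      have hU := eq_scanl S U h1 h2
      cases hhead : U.headI with
      | false => left; rw [hU, hhead]
      | true => right; rw [hcompl, hU, hhead]
    · rintro (rfl | rfl)
      · exact ⟨len_scanl false, dmap_scanl S false⟩
      · rw [hcompl]; exact ⟨len_scanl true, dmap_scanl S true⟩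
  · intro h
    have h0 : (List.scanl xor false S).getD 0 false
        = (complL (List.scanl xor false S)).getD 0 false := by rw [← h]
    rw [hcompl, getD_scanl_zero, getD_scanl_zero] at h0
    exact Bool.false_ne_true h0
  · rw [hcompl]; exact key true
  · rw [hcompl]; exact altkey true
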